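/- Let X₀ = 0, X₁, X₂, … be a very-weak martingale taking values in ℝ^N with ‖X_j - X_{j-1}‖₂ ≤ 1 for every j. Then for every a > 0 and every s ∈ ℕ, Pr(‖X_s‖₂ ≥ a) ≤ 2·e^{1 - (a-1)²/(2s)}. -/

import Mathlib

open MeasureTheory
open scoped Nat

lemma hasSum_cosh_sqrt (l : ℝ) {z : ℝ} (hz : 0 ≤ z) :
    HasSum (fun n : ℕ => (l ^ 2) ^ n * z ^ n / (2 * n)!) (Real.cosh (l * Real.sqrt z)) := by
  have h := Real.hasSum_cosh (l * Real.sqrt z)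
  have he : ∀ n : ℕ, (l * Real.sqrt z) ^ (2 * n) / ((2 * n)! : ℝ)
      = (l ^ 2) ^ n * z ^ n / ((2 * n)! : ℝ) := by
    intro n
    rw [pow_mul, mul_pow, Real.sq_sqrt hz, mul_pow]
  simpa only [he] using h

lemma cosh_sqrt_convex (l : ℝ) {w z₁ z₂ : ℝ} (hw0 : 0 ≤ w) (hw1 : w ≤ 1)
    (h1 : 0 ≤ z₁) (h2 : 0 ≤ z₂) :
    Real.cosh (l * Real.sqrt (w * z₁ + (1 - w) * z₂)) ≤
      w * Real.cosh (l * Real.sqrt z₁) + (1 - w) * Real.cosh (l * Real.sqrt z₂) := by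
  have hw1' : (0:ℝ) ≤ 1 - w := by linarith
  have hz : 0 ≤ w * z₁ + (1 - w) * z₂ := by positivity
  refine hasSum_le (fun n => ?_) (hasSum_cosh_sqrt l hz)
    (((hasSum_cosh_sqrt l h1).mul_left w).add ((hasSum_cosh_sqrt l h2).mul_left (1 - w)))
  have hpow : (w * z₁ + (1 - w) * z₂) ^ n ≤ w * z₁ ^ n + (1 - w) * z₂ ^ n := by
    have := (convexOn_pow (𝕜 := ℝ) n).2 (Set.mem_Ici.mpr h1) (Set.mem_Ici.mpr h2) hw0 hw1'
      (by ring)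
    simpa [smul_eq_mul] using this
  have hrw : w * ((l ^ 2) ^ n * z₁ ^ n / ((2 * n)! : ℝ))
      + (1 - w) * ((l ^ 2) ^ n * z₂ ^ n / ((2 * n)! : ℝ))
      = (l ^ 2) ^ n * (w * z₁ ^ n + (1 - w) * z₂ ^ n) / ((2 * n)! : ℝ) := by ring
  rw [hrw]
  have hfac : (0:ℝ) < ((2 * n)! : ℝ) := by positivity
  gcongr

lemma key_ineq {E : Type*} [NormedAddCommGroup E] [InnerProductSpace ℝ E]
    {l : ℝ} (hl : 0 ≤ l) (v d : E) (hd : ‖d‖ ≤ 1) :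
    Real.cosh (l * ‖v + d‖) ≤
      Real.cosh (l * ‖v‖) * Real.cosh l
        + (Real.sinh l * Real.sinh (l * ‖v‖) / ‖v‖) * (inner ℝ v d : ℝ) := by
  rcases eq_or_ne v 0 with rfl | hv
  · simp only [norm_zero, mul_zero, Real.sinh_zero, zero_div, zero_add, mul_zero,
      Real.cosh_zero, one_mul, inner_zero_left, zero_mul, add_zero]
    exact Real.cosh_le_cosh.mpr (by
      rw [abs_mul, abs_of_nonneg hl, abs_of_nonneg (norm_nonneg d)]
      nlinarith [norm_nonneg d])
  · have hx : 0 < ‖v‖ := norm_pos_iff.mpr hv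
    set x : ℝ := ‖v‖ with hxdef
    set p : ℝ := (inner ℝ v d : ℝ) with hpdef
    have hip : |p| ≤ x := by
      have h1 := abs_real_inner_le_norm v d
      nlinarith [norm_nonneg d]
    set t : ℝ := p / x with htdef
    have hpt : p = x * t := by rw [htdef, mul_div_assoc', eq_div_iff hx.ne', mul_comm]
    have ht1 : |t| ≤ 1 := by
      rw [htdef, abs_div, abs_of_pos hx]
      exact div_le_one_of_le₀ hip hx.le
    have htl : -1 ≤ t := by cases' abs_le.mp ht1 with h _ ; linarith
    have htu : t ≤ 1 := (abs_le.mp ht1).2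
    set w : ℝ := (1 + t) / 2 with hwdef
    have hw0 : 0 ≤ w := by rw [hwdef]; linarith
    have hw1 : w ≤ 1 := by rw [hwdef]; linarith
    have hcomb : w * (x + 1) ^ 2 + (1 - w) * (x - 1) ^ 2 = x ^ 2 + 2 * x * t + 1 := by
      rw [hwdef]; ring
    have hsq : ‖v + d‖ ^ 2 ≤ w * (x + 1) ^ 2 + (1 - w) * (x - 1) ^ 2 := by
      have h1 : ‖v + d‖ ^ 2 = x ^ 2 + 2 * p + ‖d‖ ^ 2 := by
        rw [hxdef, hpdef]; exact norm_add_sq_real v d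
      have h2 : ‖d‖ ^ 2 ≤ 1 := by nlinarith [norm_nonneg d]
      rw [hcomb, h1, hpt]; linarith
    have hnrm : ‖v + d‖ ≤ Real.sqrt (w * (x + 1) ^ 2 + (1 - w) * (x - 1) ^ 2) := by
      have := Real.sqrt_le_sqrt hsq
      rwa [Real.sqrt_sq (norm_nonneg _)] at this
    have step1 : Real.cosh (l * ‖v + d‖)
        ≤ Real.cosh (l * Real.sqrt (w * (x + 1) ^ 2 + (1 - w) * (x - 1) ^ 2)) := by
      refine Real.cosh_le_cosh.mpr ?_
      rw [abs_mul, abs_mul, abs_of_nonneg hl, abs_of_nonneg (norm_nonneg _),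
        abs_of_nonneg (Real.sqrt_nonneg _)]
      exact mul_le_mul_of_nonneg_left hnrm hl
    have step2 := cosh_sqrt_convex l hw0 hw1 (sq_nonneg (x + 1)) (sq_nonneg (x - 1))
    rw [Real.sqrt_sq_eq_abs, Real.sqrt_sq_eq_abs] at step2
    have e1 : Real.cosh (l * |x + 1|) = Real.cosh (l * (x + 1)) := by
      rw [← Real.cosh_abs (l * (x + 1)), abs_mul, abs_of_nonneg hl]
    have e2 : Real.cosh (l * |x - 1|) = Real.cosh (l * (x - 1)) := by
      rw [← Real.cosh_abs (l * (x - 1)), abs_mul, abs_of_nonneg hl]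
    rw [e1, e2] at step2
    have exp1 : Real.cosh (l * (x + 1))
        = Real.cosh (l * x) * Real.cosh l + Real.sinh (l * x) * Real.sinh l := by
      rw [mul_add, mul_one, Real.cosh_add]
    have exp2 : Real.cosh (l * (x - 1))
        = Real.cosh (l * x) * Real.cosh l - Real.sinh (l * x) * Real.sinh l := by
      rw [mul_sub, mul_one, Real.cosh_sub]
    have hfin : (Real.sinh l * Real.sinh (l * x) / x) * p
        = t * (Real.sinh (l * x) * Real.sinh l) := by
      rw [hpt]; field_simp
    rw [hfin]
    calc Real.cosh (l * ‖v + d‖)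
        ≤ w * Real.cosh (l * (x + 1)) + (1 - w) * Real.cosh (l * (x - 1)) :=
          step1.trans step2
      _ = Real.cosh (l * x) * Real.cosh l + t * (Real.sinh (l * x) * Real.sinh l) := by
          rw [exp1, exp2, hwdef]; ring

lemma condexp_clm {α : Type*} {m m0 : MeasurableSpace α} {μ : Measure α} (hm : m ≤ m0)
    [SigmaFinite (μ.trim hm)] {E F : Type*}
    [NormedAddCommGroup E] [NormedSpace ℝ E] [CompleteSpace E]
    [NormedAddCommGroup F] [NormedSpace ℝ F] [CompleteSpace F]
    (T : E →L[ℝ] F) {f : α → E} (hf : Integrable f μ) :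
    (fun ω => T ((μ[f|m]) ω)) =ᵐ[μ] μ[fun ω => T (f ω)|m] := by
  refine ae_eq_condExp_of_forall_setIntegral_eq hm (T.integrable_comp hf)
    (fun s _ _ => (T.integrable_comp integrable_condExp).integrableOn)
    (fun s hs hμs => ?_)
    ((T.continuous.comp_stronglyMeasurable
      stronglyMeasurable_condExp).aestronglyMeasurable)
  rw [T.integral_comp_comm integrable_condExp.integrableOn,
    setIntegral_condExp hm hf hs, T.integral_comp_comm hf.integrableOn]

lemma abs_coord_le_norm {N : ℕ} (x : EuclideanSpace ℝ (Fin N)) (i : Fin N) : |x i| ≤ ‖x‖ := by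
  rw [EuclideanSpace.norm_eq, ← Real.sqrt_sq_eq_abs]
  refine Real.sqrt_le_sqrt ?_
  have : x i ^ 2 = ‖x i‖ ^ 2 := by rw [Real.norm_eq_abs, sq_abs]
  rw [this]
  exact Finset.single_le_sum (fun j _ => sq_nonneg ‖x j‖) (Finset.mem_univ i)

lemma integral_inner_condexp {Ω : Type*} [m0 : MeasurableSpace Ω] (μ : Measure Ω)
    [IsProbabilityMeasure μ] {N : ℕ} {Y Z : Ω → EuclideanSpace ℝ (Fin N)}
    (hZ : Integrable Z μ)
    (hm : MeasurableSpace.comap Y (borel (EuclideanSpace ℝ (Fin N))) ≤ m0)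
    (hcond : μ[Z | MeasurableSpace.comap Y (borel (EuclideanSpace ℝ (Fin N)))] =ᵐ[μ] Y)
    {c : Ω → EuclideanSpace ℝ (Fin N)}
    (hc : Measurable[MeasurableSpace.comap Y (borel (EuclideanSpace ℝ (Fin N)))] c)
    {C : ℝ} (hcb : ∀ ω, ‖c ω‖ ≤ C) :
    ∫ ω, (inner ℝ (c ω) (Z ω) : ℝ) ∂μ = ∫ ω, (inner ℝ (c ω) (Y ω) : ℝ) ∂μ := by
  set m := MeasurableSpace.comap Y (borel (EuclideanSpace ℝ (Fin N))) with hmdef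
  have hY : Integrable Y μ := integrable_condExp.congr hcond
  have hciM : ∀ i : Fin N, Measurable[m] fun ω => c ω i := fun i =>
    ((EuclideanSpace.proj (𝕜 := ℝ) i).continuous.measurable).comp hc
  have hcbd : ∀ i : Fin N, ∀ ω, ‖c ω i‖ ≤ C := fun i ω =>
    (abs_coord_le_norm (c ω) i).trans (hcb ω)
  have hZi : ∀ i : Fin N, Integrable (fun ω => Z ω i) μ := fun i =>
    (EuclideanSpace.proj (𝕜 := ℝ) i).integrable_comp hZ
  have hYi : ∀ i : Fin N, Integrable (fun ω => Y ω i) μ := fun i =>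
    (EuclideanSpace.proj (𝕜 := ℝ) i).integrable_comp hY
  have hprodZ : ∀ i : Fin N, Integrable (fun ω => c ω i * Z ω i) μ := fun i =>
    (hZi i).bdd_mul ((hciM i).mono hm le_rfl).aestronglyMeasurable (ae_of_all _ (hcbd i))
  have hprodY : ∀ i : Fin N, Integrable (fun ω => c ω i * Y ω i) μ := fun i =>
    (hYi i).bdd_mul ((hciM i).mono hm le_rfl).aestronglyMeasurable (ae_of_all _ (hcbd i))
  have main : ∀ i : Fin N, ∫ ω, c ω i * Z ω i ∂μ = ∫ ω, c ω i * Y ω i ∂μ := by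
    intro i
    have hcondi : (μ[fun ω => Z ω i | m]) =ᵐ[μ] fun ω => Y ω i := by
      have h1 := condexp_clm hm (EuclideanSpace.proj (𝕜 := ℝ) i) hZ
      have h2 : (fun ω => (EuclideanSpace.proj (𝕜 := ℝ) i) ((μ[Z|m]) ω))
          =ᵐ[μ] fun ω => Y ω i := hcond.mono fun ω h => by simp [h]
      exact (h1.symm.trans h2 : _)
    calc ∫ ω, c ω i * Z ω i ∂μ
        = ∫ ω, (μ[(fun ω => c ω i) * (fun ω => Z ω i)|m]) ω ∂μ :=
          (integral_condExp hm).symm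
      _ = ∫ ω, ((fun ω => c ω i) * μ[fun ω => Z ω i|m]) ω ∂μ :=
          integral_congr_ae (condExp_mul_of_stronglyMeasurable_left (hciM i).stronglyMeasurable
            (hprodZ i) (hZi i))
      _ = ∫ ω, c ω i * Y ω i ∂μ :=
          integral_congr_ae (hcondi.mono fun ω h => by simp [h])
  have hinner : ∀ (u w : EuclideanSpace ℝ (Fin N)), (inner ℝ u w : ℝ) = ∑ i, u i * w i := by
    intro u w
    simp [PiLp.inner_apply, RCLike.inner_apply, conj_trivial, mul_comm]
  simp_rw [hinner]
  rw [integral_finset_sum _ (fun i _ => hprodZ i), integral_finset_sum _ (fun i _ => hprodY i)]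
  exact Finset.sum_congr rfl fun i _ => main i

/-- Vector-martingale concentration (Hayes). If X₀ = 0, X₁, X₂, … is a
very-weak martingale in ℝ^N (each X_j integrable, E[X_j | X_{j-1}] = X_{j-1}) with
increments ‖X_j - X_{j-1}‖ ≤ 1, then for every a > 0 and s ∈ ℕ,
Pr(‖X_s‖ ≥ a) ≤ 2 e^{1 - (a-1)²/(2s)}. -/
theorem very_weak_martingale_concentration {N : ℕ} {Ω : Type*} [MeasurableSpace Ω]
    (μ : Measure Ω) [IsProbabilityMeasure μ]
    (X : ℕ → Ω → EuclideanSpace ℝ (Fin N))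
    (h0 : X 0 = 0)
    (hint : ∀ j, Integrable (X j) μ)
    (hmart : ∀ j : ℕ, 1 ≤ j →
      μ[X j | MeasurableSpace.comap (X (j - 1)) (borel (EuclideanSpace ℝ (Fin N)))]
        =ᵐ[μ] X (j - 1))
    (hinc : ∀ j : ℕ, 1 ≤ j → ∀ ω, ‖X j ω - X (j - 1) ω‖ ≤ 1) :
    ∀ a : ℝ, 0 < a → ∀ s : ℕ,
      μ {ω | a ≤ ‖X s ω‖} ≤
        ENNReal.ofReal (2 * Real.exp (1 - (a - 1) ^ 2 / (2 * s))) := by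
  intro a ha s
  -- pointwise norm bound
  have hbd : ∀ j : ℕ, ∀ ω, ‖X j ω‖ ≤ j := by
    intro j
    induction j with
    | zero => intro ω; simp [h0]
    | succ n ih =>
      intro ω
      have h := hinc (n + 1) (by omega) ω
      simp only [Nat.add_sub_cancel] at h
      calc ‖X (n + 1) ω‖ = ‖(X (n + 1) ω - X n ω) + X n ω‖ := by rw [sub_add_cancel]
        _ ≤ ‖X (n + 1) ω - X n ω‖ + ‖X n ω‖ := norm_add_le _ _
        _ ≤ 1 + n := add_le_add h (ih ω)
        _ = ((n + 1 : ℕ) : ℝ) := by push_cast; ring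
  rcases Nat.eq_zero_or_pos s with rfl | hs
  · have hempty : {ω | a ≤ ‖X 0 ω‖} = ∅ := by
      ext ω; simp [h0, not_le.mpr ha]
    rw [hempty]; simp
  have hsR : (0:ℝ) < (s : ℝ) := by exact_mod_cast hs
  set l : ℝ := a / s with hldef
  have hl : 0 < l := div_pos ha hsR
  -- integrability of the cosh functionals
  have hcoshint : ∀ j : ℕ, Integrable (fun ω => Real.cosh (l * ‖X j ω‖)) μ := by
    intro j
    have hmeas : AEStronglyMeasurable (fun ω => Real.cosh (l * ‖X j ω‖)) μ :=
      (Real.continuous_cosh.comp (continuous_const.mul continuous_norm)).comp_aestronglyMeasurable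
        (hint j).aestronglyMeasurable
    refine Integrable.mono' (integrable_const (Real.cosh (l * j))) hmeas (ae_of_all _ fun ω => ?_)
    rw [Real.norm_eq_abs, abs_of_nonneg (Real.cosh_pos _).le]
    refine Real.cosh_le_cosh.mpr ?_
    rw [abs_mul, abs_mul, abs_of_nonneg hl.le, abs_of_nonneg (norm_nonneg _),
      abs_of_nonneg (by positivity : (0:ℝ) ≤ (j:ℝ))]
    exact mul_le_mul_of_nonneg_left (hbd j ω) hl.le
  -- main induction
  have hkey : ∀ j : ℕ, ∫ ω, Real.cosh (l * ‖X j ω‖) ∂μ ≤ Real.cosh l ^ j := by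
    intro j
    induction j with
    | zero => simp [h0]
    | succ n ih =>
      have hinc' := hinc (n + 1) (by omega)
      simp only [Nat.add_sub_cancel] at hinc'
      have hmart' := hmart (n + 1) (by omega)
      simp only [Nat.add_sub_cancel] at hmart'
      by_cases hm : MeasurableSpace.comap (X n) (borel (EuclideanSpace ℝ (Fin N)))
          ≤ (inferInstance : MeasurableSpace Ω)
      · -- the conditional expectation is genuine
        haveI : SigmaFinite (μ.trim hm) := inferInstance
        set c : Ω → EuclideanSpace ℝ (Fin N) :=
          fun ω => (Real.sinh l * Real.sinh (l * ‖X n ω‖) / ‖X n ω‖) • X n ω with hcdef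
        have hXnm : Measurable[MeasurableSpace.comap (X n)
            (borel (EuclideanSpace ℝ (Fin N)))] (X n) := by
          intro t ht
          rw [BorelSpace.measurable_eq (α := EuclideanSpace ℝ (Fin N))] at ht
          exact MeasurableSpace.measurableSet_comap.mpr ⟨t, ht, rfl⟩
        have hg : Measurable fun v : EuclideanSpace ℝ (Fin N) =>
            (Real.sinh l * Real.sinh (l * ‖v‖) / ‖v‖) • v :=
          ((measurable_const.mul ((Real.continuous_sinh.comp
            (continuous_const.mul continuous_norm)).measurable)).div
            continuous_norm.measurable).smul measurable_id
        have hcM : Measurable[MeasurableSpace.comap (X n)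
            (borel (EuclideanSpace ℝ (Fin N)))] c := hg.comp hXnm
        have hcb : ∀ ω, ‖c ω‖ ≤ Real.sinh l * Real.sinh (l * n) := by
          intro ω
          by_cases hz : X n ω = 0
          · simp only [hcdef, hz, smul_zero, norm_zero]
            have h1 : 0 ≤ Real.sinh l := Real.sinh_nonneg_iff.mpr hl.le
            have h2 : 0 ≤ Real.sinh (l * n) := Real.sinh_nonneg_iff.mpr (by positivity)
            positivity
          · have hxp : 0 < ‖X n ω‖ := norm_pos_iff.mpr hz
            have hco : 0 ≤ Real.sinh l * Real.sinh (l * ‖X n ω‖) / ‖X n ω‖ := by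
              have h1 : 0 ≤ Real.sinh l := Real.sinh_nonneg_iff.mpr hl.le
              have h2 : 0 ≤ Real.sinh (l * ‖X n ω‖) :=
                Real.sinh_nonneg_iff.mpr (by positivity)
              positivity
            rw [hcdef, norm_smul, Real.norm_eq_abs, abs_of_nonneg hco,
              div_mul_cancel₀ _ hxp.ne']
            refine mul_le_mul_of_nonneg_left ?_ (Real.sinh_nonneg_iff.mpr hl.le)
            exact Real.sinh_le_sinh.mpr (mul_le_mul_of_nonneg_left (hbd n ω) hl.le)
        have hzero : ∫ ω, (inner ℝ (c ω) (X (n + 1) ω) : ℝ) ∂μ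
            = ∫ ω, (inner ℝ (c ω) (X n ω) : ℝ) ∂μ :=
          integral_inner_condexp μ (hint (n + 1)) hm hmart' hcM hcb
        -- pointwise key inequality
        have hpt : ∀ ω, Real.cosh (l * ‖X (n + 1) ω‖) ≤
            Real.cosh (l * ‖X n ω‖) * Real.cosh l
              + ((inner ℝ (c ω) (X (n + 1) ω) : ℝ) - (inner ℝ (c ω) (X n ω) : ℝ)) := by
          intro ω
          have hk := key_ineq hl.le (X n ω) (X (n + 1) ω - X n ω) (hinc' ω)
          rw [add_sub_cancel] at hk
          have hip : (inner ℝ (c ω) (X (n + 1) ω) : ℝ) - (inner ℝ (c ω) (X n ω) : ℝ)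
              = (Real.sinh l * Real.sinh (l * ‖X n ω‖) / ‖X n ω‖)
                * (inner ℝ (X n ω) (X (n + 1) ω - X n ω) : ℝ) := by
            rw [hcdef]
            simp only [real_inner_smul_left, inner_sub_right]
            ring
          rw [hip]
          exact hk
        -- integrability of the inner products
        have hcm0 : AEStronglyMeasurable c μ :=
          (hcM.mono hm le_rfl).aestronglyMeasurable
        have hinnerint : ∀ k : ℕ, Integrable (fun ω => (inner ℝ (c ω) (X k ω) : ℝ)) μ := by
          intro k
          refine Integrable.mono' (integrable_const (Real.sinh l * Real.sinh (l * n) * k))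
            (hcm0.inner (hint k).aestronglyMeasurable) (ae_of_all _ fun ω => ?_)
          rw [Real.norm_eq_abs]
          calc |(inner ℝ (c ω) (X k ω) : ℝ)| ≤ ‖c ω‖ * ‖X k ω‖ := abs_real_inner_le_norm _ _
            _ ≤ Real.sinh l * Real.sinh (l * n) * k := by
              refine mul_le_mul (hcb ω) (hbd k ω) (norm_nonneg _) ?_
              have h1 : 0 ≤ Real.sinh l := Real.sinh_nonneg_iff.mpr hl.le
              have h2 : 0 ≤ Real.sinh (l * n) := Real.sinh_nonneg_iff.mpr (by positivity)
              positivity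
        have hsubint : Integrable (fun ω =>
            (inner ℝ (c ω) (X (n + 1) ω) : ℝ) - (inner ℝ (c ω) (X n ω) : ℝ)) μ :=
          (hinnerint (n + 1)).sub (hinnerint n)
        have hRHSint : Integrable (fun ω => Real.cosh (l * ‖X n ω‖) * Real.cosh l
            + ((inner ℝ (c ω) (X (n + 1) ω) : ℝ) - (inner ℝ (c ω) (X n ω) : ℝ))) μ :=
          ((hcoshint n).mul_const _).add hsubint
        calc ∫ ω, Real.cosh (l * ‖X (n + 1) ω‖) ∂μ
            ≤ ∫ ω, (Real.cosh (l * ‖X n ω‖) * Real.cosh l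
              + ((inner ℝ (c ω) (X (n + 1) ω) : ℝ) - (inner ℝ (c ω) (X n ω) : ℝ))) ∂μ :=
              integral_mono_of_nonneg (ae_of_all _ fun ω => (Real.cosh_pos _).le) hRHSint
                (ae_of_all _ hpt)
          _ = ∫ ω, Real.cosh (l * ‖X n ω‖) * Real.cosh l ∂μ
              + ∫ ω, ((inner ℝ (c ω) (X (n + 1) ω) : ℝ)
                - (inner ℝ (c ω) (X n ω) : ℝ)) ∂μ :=
              integral_add ((hcoshint n).mul_const _) hsubint
          _ = ∫ ω, Real.cosh (l * ‖X n ω‖) * Real.cosh l ∂μ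
              + (∫ ω, (inner ℝ (c ω) (X (n + 1) ω) : ℝ) ∂μ
                - ∫ ω, (inner ℝ (c ω) (X n ω) : ℝ) ∂μ) := by
              rw [integral_sub (hinnerint (n + 1)) (hinnerint n)]
          _ = (∫ ω, Real.cosh (l * ‖X n ω‖) ∂μ) * Real.cosh l := by
              rw [hzero, sub_self, add_zero, integral_mul_const]
          _ ≤ Real.cosh l ^ n * Real.cosh l :=
              mul_le_mul_of_nonneg_right ih (Real.cosh_pos _).le
          _ = Real.cosh l ^ (n + 1) := (pow_succ _ _).symm
      · -- degenerate case: X n is a.e. zero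
        have hXn0 : X n =ᵐ[μ] 0 := by
          have := hmart'
          rw [condExp_of_not_le hm] at this
          exact this.symm
        have hae : ∀ᵐ ω ∂μ, Real.cosh (l * ‖X (n + 1) ω‖) ≤ Real.cosh l := by
          filter_upwards [hXn0] with ω hω
          have hn1 : ‖X (n + 1) ω‖ ≤ 1 := by
            calc ‖X (n + 1) ω‖ = ‖(X (n + 1) ω - X n ω) + X n ω‖ := by rw [sub_add_cancel]
              _ ≤ ‖X (n + 1) ω - X n ω‖ + ‖X n ω‖ := norm_add_le _ _
              _ ≤ 1 + 0 := by
                  refine add_le_add (hinc' ω) ?_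
                  simp [hω]
              _ = 1 := by ring
          refine Real.cosh_le_cosh.mpr ?_
          rw [abs_mul, abs_of_nonneg hl.le, abs_of_nonneg (norm_nonneg _)]
          calc l * ‖X (n + 1) ω‖ ≤ l * 1 := mul_le_mul_of_nonneg_left hn1 hl.le
            _ = l := mul_one l
        calc ∫ ω, Real.cosh (l * ‖X (n + 1) ω‖) ∂μ
            ≤ ∫ _ω, Real.cosh l ∂μ :=
              integral_mono_ae (hcoshint (n + 1)) (integrable_const _) hae
          _ = Real.cosh l := by simp
          _ = Real.cosh l ^ 1 := (pow_one _).symm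
          _ ≤ Real.cosh l ^ (n + 1) :=
              pow_le_pow_right₀ (Real.one_le_cosh l) (by omega)
  -- Markov inequality
  have hmarkov := mul_meas_ge_le_integral_of_nonneg
    (ae_of_all μ fun ω => (Real.cosh_pos (l * ‖X s ω‖)).le) (hcoshint s) (Real.cosh (l * a))
  have hsubset : {ω | a ≤ ‖X s ω‖} ⊆ {ω | Real.cosh (l * a) ≤ Real.cosh (l * ‖X s ω‖)} := by
    intro ω hω
    refine Real.cosh_le_cosh.mpr ?_
    rw [abs_mul, abs_mul, abs_of_nonneg hl.le, abs_of_nonneg ha.le,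
      abs_of_nonneg (norm_nonneg _)]
    exact mul_le_mul_of_nonneg_left hω hl.le
  have hcoshla : 0 < Real.cosh (l * a) := Real.cosh_pos _
  have hT : (μ {ω | Real.cosh (l * a) ≤ Real.cosh (l * ‖X s ω‖)}).toReal
      ≤ Real.cosh l ^ s / Real.cosh (l * a) := by
    rw [le_div_iff₀ hcoshla, mul_comm]
    exact hmarkov.trans (hkey s)
  have hfinal : Real.cosh l ^ s / Real.cosh (l * a)
      ≤ 2 * Real.exp (1 - (a - 1) ^ 2 / (2 * s)) := by
    have h1 : Real.cosh l ^ s ≤ Real.exp ((s : ℝ) * (l ^ 2 / 2)) := by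
      rw [Real.exp_nat_mul]
      exact pow_le_pow_left₀ (Real.cosh_pos _).le (Real.cosh_le_exp_half_sq l) s
    have h2 : Real.exp (l * a) / 2 ≤ Real.cosh (l * a) := by
      rw [Real.cosh_eq]
      have := (Real.exp_pos (-(l * a))).le
      linarith
    have h3 : Real.cosh l ^ s / Real.cosh (l * a)
        ≤ Real.exp ((s : ℝ) * (l ^ 2 / 2)) / (Real.exp (l * a) / 2) := by
      exact div_le_div₀ (Real.exp_pos _).le h1 (by positivity) h2
    have h4 : Real.exp ((s : ℝ) * (l ^ 2 / 2)) / (Real.exp (l * a) / 2)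
        = 2 * Real.exp ((s : ℝ) * (l ^ 2 / 2) - l * a) := by
      rw [Real.exp_sub]
      field_simp
    have h5 : (s : ℝ) * (l ^ 2 / 2) - l * a = -(a ^ 2 / (2 * s)) := by
      rw [hldef]; field_simp; ring
    have h6 : -(a ^ 2 / (2 * (s : ℝ))) ≤ 1 - (a - 1) ^ 2 / (2 * s) := by
      have h2s : (0:ℝ) < 2 * s := by positivity
      have h7 : (a - 1) ^ 2 / (2 * (s : ℝ)) - a ^ 2 / (2 * s) = (1 - 2 * a) / (2 * s) := by
        field_simp; ring
      have h8 : (1 - 2 * a) / (2 * (s : ℝ)) ≤ 1 := by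
        rw [div_le_one h2s]
        have : (1:ℝ) ≤ s := by exact_mod_cast hs
        linarith
      linarith
    calc Real.cosh l ^ s / Real.cosh (l * a)
        ≤ Real.exp ((s : ℝ) * (l ^ 2 / 2)) / (Real.exp (l * a) / 2) := h3
      _ = 2 * Real.exp ((s : ℝ) * (l ^ 2 / 2) - l * a) := h4
      _ = 2 * Real.exp (-(a ^ 2 / (2 * s))) := by rw [h5]
      _ ≤ 2 * Real.exp (1 - (a - 1) ^ 2 / (2 * s)) := by
          have := Real.exp_le_exp.mpr h6
          linarith
  calc μ {ω | a ≤ ‖X s ω‖}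
      ≤ μ {ω | Real.cosh (l * a) ≤ Real.cosh (l * ‖X s ω‖)} := measure_mono hsubset
    _ = ENNReal.ofReal ((μ {ω | Real.cosh (l * a) ≤ Real.cosh (l * ‖X s ω‖)}).toReal) :=
        (ENNReal.ofReal_toReal (measure_ne_top μ _)).symm
    _ ≤ ENNReal.ofReal (2 * Real.exp (1 - (a - 1) ^ 2 / (2 * s))) :=
        ENNReal.ofReal_le_ofReal (hT.trans hfinal)
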